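/- arXiv:1708.04127 — 6 statements merged into one kernel-verified Lean document; each statement's English description precedes it below -/
import Mathlib

section
/- Let π : U → ℝ be dual feasible for the restricted master problem RLPM associated with a nonempty subset L' ⊆ L of loads (i.e., π_j ≥ 0 for all j ∈ U and ∑_{j∈S} π_j ≤ 1 for every S ∈ L'). Let D = max_{S∈L} ∑_{j∈S} π_j be the maximum over ALL loads, so that the minimum reduced cost of the pricing subproblem is v(PSP) = 1 − D, and assume D > 0. Then every feasible solution x of the master LP (LPM) satisfies ∑_{S∈L} x_S ≥ (∑_{j∈U} π_j) / D; in particular, the optimal value satisfies v(LPM) ≥ (∑_{j∈U} π_j)/(1 − v(PSP)), which for an optimal dual solution π of RLPM reads v(LPM) ≥ v(RLPM)/(1 − v(PSP)). -/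
open Finset

/-- If `π` is dual feasible for the restricted master problem RLPM
(associated with a nonempty `L' ⊆ L`), `D = max_{S ∈ L} ∑_{j∈S} π_j > 0` (so the
minimum reduced cost of the pricing subproblem is `v(PSP) = 1 - D`), then every
feasible solution `x` of the master LP (LPM) satisfies
`∑_{S∈L} x_S ≥ (∑_{j∈U} π_j) / D`. -/
theorem lpm_dual_ratio_bound {ι : Type*} [DecidableEq ι]
    (U : Finset ι) (hUne : U.Nonempty)
    (t : ι → ℕ) (c : ℕ) (hc : 0 < c)
    (ht : ∀ j ∈ U, 0 < t j) (htc : ∀ j ∈ U, t j ≤ c)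
    -- `L` is the set of all loads
    (L : Finset (Finset ι))
    (hL : L = U.powerset.filter fun S => ∑ j ∈ S, t j ≤ c)
    -- `L'` is a nonempty subset of loads (columns of the RLPM)
    (L' : Finset (Finset ι)) (hL'sub : L' ⊆ L) (hL'ne : L'.Nonempty)
    -- `π` is dual feasible for the RLPM
    (π : ι → ℝ)
    (hπnonneg : ∀ j ∈ U, 0 ≤ π j)
    (hπdual : ∀ S ∈ L', ∑ j ∈ S, π j ≤ 1)
    -- `D = max_{S ∈ L} ∑_{j ∈ S} π_j`, and `D > 0`
    (D : ℝ)
    (hDub : ∀ S ∈ L, ∑ j ∈ S, π j ≤ D)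
    (hDmem : ∃ S ∈ L, ∑ j ∈ S, π j = D)
    (hDpos : 0 < D)
    -- `x` is any feasible solution of the LPM
    (x : Finset ι → ℝ)
    (hxnonneg : ∀ S ∈ L, 0 ≤ x S)
    (hxcover : ∀ j ∈ U, 1 ≤ ∑ S ∈ L.filter (fun S => j ∈ S), x S) :
    (∑ j ∈ U, π j) / D ≤ ∑ S ∈ L, x S := by
  rw [div_le_iff₀ hDpos]
  have key : ∑ j ∈ U, π j ≤ ∑ S ∈ L, x S * ∑ j ∈ S, π j := by
    have step1 : ∑ j ∈ U, π j ≤ ∑ j ∈ U, π j * ∑ S ∈ L.filter (fun S => j ∈ S), x S := by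
      apply Finset.sum_le_sum
      intro j hj
      nlinarith [hxcover j hj, hπnonneg j hj]
    have step2 : ∑ j ∈ U, π j * ∑ S ∈ L.filter (fun S => j ∈ S), x S
        = ∑ S ∈ L, x S * ∑ j ∈ S, π j := by
      have : ∀ S ∈ L, S ⊆ U := by
        intro S hS
        rw [hL] at hS
        exact Finset.mem_powerset.mp (Finset.mem_filter.mp hS).1
      calc ∑ j ∈ U, π j * ∑ S ∈ L.filter (fun S => j ∈ S), x S
          = ∑ j ∈ U, ∑ S ∈ L, if j ∈ S then π j * x S else 0 := by
            apply Finset.sum_congr rfl; intro j _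
            simp [Finset.mul_sum, Finset.sum_filter, mul_ite, mul_zero]
        _ = ∑ S ∈ L, ∑ j ∈ U, if j ∈ S then π j * x S else 0 := Finset.sum_comm
        _ = ∑ S ∈ L, x S * ∑ j ∈ S, π j := by
            apply Finset.sum_congr rfl; intro S hS
            rw [← Finset.sum_filter, Finset.mul_sum,
              Finset.filter_mem_eq_inter, Finset.inter_eq_right.mpr (this S hS)]
            apply Finset.sum_congr rfl; intro j _; ring
    linarith
  have step3 : ∑ S ∈ L, x S * ∑ j ∈ S, π j ≤ ∑ S ∈ L, x S * D := by
    apply Finset.sum_le_sum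
    intro S hS
    exact mul_le_mul_of_nonneg_left (hDub S hS) (hxnonneg S hS)
  rw [← Finset.sum_mul] at step3
  linarith
end

section
/- Let π : U → ℝ be dual feasible for RLPM (π_j ≥ 0 for all j ∈ U and ∑_{j∈S} π_j ≤ 1 for every S ∈ L'), let D = max_{S∈L} ∑_{j∈S} π_j > 0 (so the minimum reduced cost is v(PSP) = 1 − D), and suppose x' : L' → ℝ is feasible for RLPM with ∑_{S∈L'} x'_S = ∑_{j∈U} π_j (so π and x' are a primal–dual optimal pair of RLPM with common value v(RLPM) = ∑_{j∈U} π_j). If ⌈∑_{j∈U} π_j⌉ = ⌈(∑_{j∈U} π_j)/D⌉, then ⌈v(LPM)⌉ = ⌈∑_{j∈U} π_j⌉; i.e., if ⌈v(RLPM)⌉ = ⌈v(RLPM)/(1 − v(PSP))⌉, column generation may terminate with ⌈v(RLPM)⌉ as the obtained lower bound on the optimal number of stations. -/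
open Finset

/-- If `π` is dual feasible for RLPM, `D = max_{S∈L} ∑_{j∈S} π_j > 0`
(so `v(PSP) = 1 - D`), and `x'` is primal feasible for RLPM with objective value
`∑_{S∈L'} x'_S = ∑_{j∈U} π_j` (a primal–dual optimal pair, with common value
`v(RLPM) = ∑_{j∈U} π_j`), and if `⌈∑_{j∈U} π_j⌉ = ⌈(∑_{j∈U} π_j)/D⌉`
(i.e. `⌈v(RLPM)⌉ = ⌈v(RLPM)/(1 - v(PSP))⌉`), then `⌈v(LPM)⌉ = ⌈∑_{j∈U} π_j⌉`:
column generation may terminate with `⌈v(RLPM)⌉` as the obtained lower bound. -/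
theorem column_generation_termination {ι : Type*} [DecidableEq ι]
    (U : Finset ι) (hUne : U.Nonempty)
    (t : ι → ℕ) (c : ℕ) (hc : 0 < c)
    (ht : ∀ j ∈ U, 0 < t j) (htc : ∀ j ∈ U, t j ≤ c)
    -- `L` is the set of all loads
    (L : Finset (Finset ι))
    (hL : L = U.powerset.filter fun S => ∑ j ∈ S, t j ≤ c)
    -- `L'` is a nonempty subset of loads (columns of the RLPM)
    (L' : Finset (Finset ι)) (hL'sub : L' ⊆ L) (hL'ne : L'.Nonempty)
    -- `π` is dual feasible for the RLPM
    (π : ι → ℝ)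
    (hπnonneg : ∀ j ∈ U, 0 ≤ π j)
    (hπdual : ∀ S ∈ L', ∑ j ∈ S, π j ≤ 1)
    -- `D = max_{S ∈ L} ∑_{j ∈ S} π_j`, and `D > 0`
    (D : ℝ)
    (hDub : ∀ S ∈ L, ∑ j ∈ S, π j ≤ D)
    (hDmem : ∃ S ∈ L, ∑ j ∈ S, π j = D)
    (hDpos : 0 < D)
    -- `x'` is primal feasible for the RLPM with value `∑_{j∈U} π_j`
    (x' : Finset ι → ℝ)
    (hx'nonneg : ∀ S ∈ L', 0 ≤ x' S)
    (hx'cover : ∀ j ∈ U, 1 ≤ ∑ S ∈ L'.filter (fun S => j ∈ S), x' S)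
    (hx'val : ∑ S ∈ L', x' S = ∑ j ∈ U, π j)
    -- `vLPM` is the optimal value of the master LP
    (vLPM : ℝ)
    (hvLPM : IsLeast {v : ℝ | ∃ x : Finset ι → ℝ,
        (∀ S ∈ L, 0 ≤ x S) ∧
        (∀ j ∈ U, 1 ≤ ∑ S ∈ L.filter (fun S => j ∈ S), x S) ∧
        v = ∑ S ∈ L, x S} vLPM)
    -- the ceiling termination criterion
    (hceil : ⌈∑ j ∈ U, π j⌉ = ⌈(∑ j ∈ U, π j) / D⌉) :
    ⌈vLPM⌉ = ⌈∑ j ∈ U, π j⌉ := by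

  have hSsubU : ∀ S ∈ L, S ⊆ U := by
    intro S hS
    rw [hL, Finset.mem_filter, Finset.mem_powerset] at hS
    exact hS.1
  -- Upper bound: vLPM ≤ ∑ π
  have hub : vLPM ≤ ∑ j ∈ U, π j := by
    apply hvLPM.2
    refine ⟨fun S => if S ∈ L' then x' S else 0, ?_, ?_, ?_⟩
    · intro S hS
      dsimp only
      split
      · exact hx'nonneg _ ‹_›
      · exact le_refl 0
    · intro j hj
      dsimp only
      have : ∑ S ∈ L.filter (fun S => j ∈ S), (if S ∈ L' then x' S else 0)
          = ∑ S ∈ L'.filter (fun S => j ∈ S), x' S := by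
        rw [← Finset.sum_subset (Finset.filter_subset_filter _ hL'sub)]
        · exact Finset.sum_congr rfl (fun S hS => if_pos (Finset.mem_filter.mp hS).1)
        · intro S hS hS'
          have : S ∉ L' := fun h => hS' (Finset.mem_filter.mpr ⟨h, (Finset.mem_filter.mp hS).2⟩)
          exact if_neg this
      rw [this]; exact hx'cover j hj
    · dsimp only
      have : ∑ S ∈ L, (if S ∈ L' then x' S else 0) = ∑ S ∈ L', x' S := by
        rw [← Finset.sum_subset hL'sub (fun S _ hS' => if_neg hS')]
        exact Finset.sum_congr rfl (fun S hS => if_pos hS)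
      rw [this, hx'val]
  -- Lower bound: vLPM ≥ (∑ π)/D
  have hlb : (∑ j ∈ U, π j) / D ≤ vLPM := by
    obtain ⟨x, hxn, hxc, hxv⟩ := hvLPM.1
    have swap : ∑ S ∈ L, x S * ∑ j ∈ S, π j
        = ∑ j ∈ U, π j * ∑ S ∈ L.filter (fun S => j ∈ S), x S := by
      have h1 : ∀ S ∈ L, x S * ∑ j ∈ S, π j
          = ∑ j ∈ U, (if j ∈ S then x S * π j else 0) := by
        intro S hS
        rw [Finset.mul_sum, Finset.sum_ite_mem, Finset.inter_eq_right.mpr (hSsubU S hS)]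
      rw [Finset.sum_congr rfl h1, Finset.sum_comm]
      refine Finset.sum_congr rfl (fun j hj => ?_)
      rw [Finset.mul_sum, Finset.sum_filter]
      refine Finset.sum_congr rfl (fun S hS => ?_)
      split <;> ring
    have key : ∑ j ∈ U, π j ≤ D * vLPM := by
      calc ∑ j ∈ U, π j ≤ ∑ j ∈ U, π j * ∑ S ∈ L.filter (fun S => j ∈ S), x S := by
            refine Finset.sum_le_sum (fun j hj => ?_)
            nlinarith [hπnonneg j hj, hxc j hj]
        _ = ∑ S ∈ L, x S * ∑ j ∈ S, π j := swap.symm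
        _ ≤ ∑ S ∈ L, x S * D := by
            refine Finset.sum_le_sum (fun S hS => ?_)
            exact mul_le_mul_of_nonneg_left (hDub S hS) (hxn S hS)
        _ = D * ∑ S ∈ L, x S := by rw [← Finset.sum_mul]; ring
        _ = D * vLPM := by rw [hxv]
    rw [div_le_iff₀ hDpos] at *
    linarith [key]
  have h1 : ⌈vLPM⌉ ≤ ⌈∑ j ∈ U, π j⌉ := Int.ceil_le_ceil hub
  have h2 : ⌈(∑ j ∈ U, π j) / D⌉ ≤ ⌈vLPM⌉ := Int.ceil_le_ceil hlb
  omega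
end

section
/- (Validity of the lower bound LB₂.) If S₁, …, S_m is a partition of the task set T into loads (pairwise disjoint, union T, and ∑_{j∈S_k} t_j ≤ c for every k), then m ≥ |{ j ∈ T : 2·t_j > c }| + ⌈ |{ j ∈ T : 2·t_j = c }| / 2 ⌉. -/
open Finset

/-- Validity of the lower bound LB₂: if `S₁, …, S_m` is a partition
of the task set `T` into loads, then
`m ≥ |{j ∈ T : 2·t_j > c}| + ⌈|{j ∈ T : 2·t_j = c}| / 2⌉`. -/
theorem lb2_valid {ι : Type*} [DecidableEq ι]
    (T : Finset ι) (t : ι → ℕ) (c : ℕ) (hc : 0 < c)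
    (ht : ∀ j ∈ T, 0 < t j) (htc : ∀ j ∈ T, t j ≤ c)
    (m : ℕ) (S : Fin m → Finset ι)
    (hdisj : ∀ k l : Fin m, k ≠ l → Disjoint (S k) (S l))
    (hsub : ∀ k : Fin m, S k ⊆ T)
    (hcover : ∀ j ∈ T, ∃ k : Fin m, j ∈ S k)
    (hload : ∀ k : Fin m, ∑ j ∈ S k, t j ≤ c) :
    ((T.filter fun j => c < 2 * t j).card : ℤ)
      + ⌈((T.filter fun j => 2 * t j = c).card : ℝ) / 2⌉ ≤ (m : ℤ) := by
  classical
  choose st hst using hcover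
  by_cases hTm : T = ∅
  · subst hTm
    simp
  have hm : 0 < m := by
    obtain ⟨j, hj⟩ := Finset.nonempty_iff_ne_empty.mpr hTm
    exact (st j hj).pos
  have hne : Nonempty (Fin m) := ⟨⟨0, hm⟩⟩
  set f : ι → Fin m := fun j => if h : j ∈ T then st j h else Classical.arbitrary _ with hf
  have hfmem : ∀ j ∈ T, j ∈ S (f j) := by
    intro j hj; simp only [hf, dif_pos hj]; exact hst j hj
  have key : ∀ k : Fin m, ∀ j1 ∈ S k, ∀ j2 ∈ S k, j1 ≠ j2 → t j1 + t j2 ≤ c := by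
    intro k j1 h1 j2 h2 hnej
    calc t j1 + t j2 = ∑ j ∈ ({j1, j2} : Finset ι), t j := by
          rw [Finset.sum_pair hnej]
      _ ≤ ∑ j ∈ S k, t j := by
          apply Finset.sum_le_sum_of_subset
          intro x hx
          simp only [Finset.mem_insert, Finset.mem_singleton] at hx
          rcases hx with h | h <;> subst h <;> assumption
      _ ≤ c := hload k
  set SA := Finset.univ.filter (fun k : Fin m => ∃ j ∈ S k, c < 2 * t j) with hSA
  have hSAle : SA.card ≤ m := by
    calc SA.card ≤ (Finset.univ : Finset (Fin m)).card := Finset.card_le_card (Finset.filter_subset _ _)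
      _ = m := Finset.card_univ.trans (Fintype.card_fin m)
  have hAcard : (T.filter fun j => c < 2 * t j).card ≤ SA.card := by
    apply Finset.card_le_card_of_injOn f
    · intro j hj
      simp only [Finset.mem_coe, Finset.mem_filter] at hj
      simp only [Finset.mem_coe, hSA, Finset.mem_filter, Finset.mem_univ, true_and]
      exact ⟨j, hfmem j hj.1, hj.2⟩
    · intro j1 h1 j2 h2 heq
      simp only [Finset.coe_filter, Set.mem_setOf_eq] at h1 h2
      by_contra hnej
      have h2' : j2 ∈ S (f j1) := heq ▸ hfmem j2 h2.1
      have := key (f j1) j1 (hfmem j1 h1.1) j2 h2' hnej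
      omega
  -- bound on the half tasks
  have hBsub : (T.filter fun j => 2 * t j = c) ⊆
      SAᶜ.biUnion (fun k => (T.filter fun j => 2 * t j = c) ∩ S k) := by
    intro j hj
    have hj' := Finset.mem_filter.mp hj
    apply Finset.mem_biUnion.mpr
    refine ⟨f j, ?_, Finset.mem_inter.mpr ⟨hj, hfmem j hj'.1⟩⟩
    simp only [Finset.mem_compl, hSA, Finset.mem_filter, Finset.mem_univ, true_and]
    rintro ⟨j1, hj1, hj1c⟩
    have hnej : j1 ≠ j := by intro h; subst h; omega
    have := key (f j) j1 hj1 j (hfmem j hj'.1) hnej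
    omega
  have hBstation : ∀ k : Fin m, ((T.filter fun j => 2 * t j = c) ∩ S k).card ≤ 2 := by
    intro k
    by_contra hgt
    push_neg at hgt
    obtain ⟨a, b, c', ha, hb, hc', hab, hac, hbc⟩ := Finset.two_lt_card_iff.mp hgt
    have ha' := Finset.mem_inter.mp ha
    have hb' := Finset.mem_inter.mp hb
    have hc'' := Finset.mem_inter.mp hc'
    have hta := (Finset.mem_filter.mp ha'.1).2
    have htb := (Finset.mem_filter.mp hb'.1).2
    have htc' := (Finset.mem_filter.mp hc''.1).2
    have hsum : t a + t b + t c' ≤ c := by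
      calc t a + t b + t c' = ∑ j ∈ ({a, b, c'} : Finset ι), t j := by
            rw [Finset.sum_insert (by simp [hab, hac]), Finset.sum_pair hbc]
            ring
        _ ≤ ∑ j ∈ S k, t j := by
            apply Finset.sum_le_sum_of_subset
            intro x hx
            simp only [Finset.mem_insert, Finset.mem_singleton] at hx
            rcases hx with h | h | h <;> subst h
            exacts [ha'.2, hb'.2, hc''.2]
        _ ≤ c := hload k
    omega
  have hBcard : (T.filter fun j => 2 * t j = c).card ≤ 2 * (m - SA.card) := by
    calc (T.filter fun j => 2 * t j = c).card
        ≤ (SAᶜ.biUnion (fun k => (T.filter fun j => 2 * t j = c) ∩ S k)).card :=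
          Finset.card_le_card hBsub
      _ ≤ ∑ k ∈ SAᶜ, ((T.filter fun j => 2 * t j = c) ∩ S k).card :=
          Finset.card_biUnion_le
      _ ≤ ∑ _k ∈ SAᶜ, 2 := Finset.sum_le_sum (fun k _ => hBstation k)
      _ = SAᶜ.card * 2 := Finset.sum_const _
      _ = 2 * (m - SA.card) := by
          rw [Finset.card_compl, Fintype.card_fin]
          ring
  have hceil : ⌈((T.filter fun j => 2 * t j = c).card : ℝ) / 2⌉ ≤ ((m : ℤ) - SA.card) := by
    apply Int.ceil_le.mpr
    have : ((T.filter fun j => 2 * t j = c).card : ℝ) ≤ 2 * ((m : ℝ) - SA.card) := by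
      have h2 : (2 : ℕ) * (m - SA.card) = 2 * m - 2 * SA.card := by omega
      have := hBcard
      rw [h2] at this
      have hcast : ((2 * m - 2 * SA.card : ℕ) : ℝ) = 2 * (m : ℝ) - 2 * (SA.card : ℝ) := by
        have : 2 * SA.card ≤ 2 * m := by omega
        push_cast [Nat.cast_sub this]
        ring
      calc ((T.filter fun j => 2 * t j = c).card : ℝ)
          ≤ ((2 * m - 2 * SA.card : ℕ) : ℝ) := by exact_mod_cast this
        _ = 2 * ((m : ℝ) - SA.card) := by rw [hcast]; ring
    push_cast
    linarith
  have : ((T.filter fun j => c < 2 * t j).card : ℤ) ≤ (SA.card : ℤ) := by exact_mod_cast hAcard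
  linarith
end

section
/- (Key step for LB₃: unit weight capacity of a load.) Define weights w_j for j ∈ T by: w_j = 1 if 3·t_j > 2c; w_j = 2/3 if 3·t_j = 2c; w_j = 1/2 if c < 3·t_j < 2c; w_j = 1/3 if 3·t_j = c; and w_j = 0 if 3·t_j < c. Then for every load S ⊆ T (i.e., every S with ∑_{j∈S} t_j ≤ c) one has ∑_{j∈S} w_j ≤ 1. -/
open Finset

lemma lb3_count_lemma (a b d e c : ℕ) (hc : 0 < c)
    (h : a * (2 * c + 1) + b * (2 * c) + d * (c + 1) + e * c ≤ 3 * c) :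
    6 * a + 4 * b + 3 * d + 2 * e ≤ 6 := by
  have ha : a ≤ 1 := by nlinarith
  have hb : b ≤ 1 := by nlinarith
  have hd : d ≤ 2 := by nlinarith
  have he : e ≤ 3 := by nlinarith
  interval_cases a <;> interval_cases b <;> interval_cases d <;> interval_cases e <;> omega

/-- Key step for LB₃: unit weight capacity of a load: with weights
`w_j = 1` if `3t_j > 2c`, `w_j = 2/3` if `3t_j = 2c`, `w_j = 1/2` if
`c < 3t_j < 2c`, `w_j = 1/3` if `3t_j = c` and `w_j = 0` if `3t_j < c`,
every load `S ⊆ T` (i.e. `∑_{j∈S} t_j ≤ c`) satisfies `∑_{j∈S} w_j ≤ 1`. -/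
theorem lb3_load_weight_capacity {ι : Type*} [DecidableEq ι]
    (T : Finset ι) (t : ι → ℕ) (c : ℕ) (hc : 0 < c)
    (ht : ∀ j ∈ T, 0 < t j) (htc : ∀ j ∈ T, t j ≤ c)
    (w : ι → ℝ)
    (hw1 : ∀ j ∈ T, 2 * c < 3 * t j → w j = 1)
    (hw2 : ∀ j ∈ T, 3 * t j = 2 * c → w j = 2 / 3)
    (hw3 : ∀ j ∈ T, c < 3 * t j → 3 * t j < 2 * c → w j = 1 / 2)
    (hw4 : ∀ j ∈ T, 3 * t j = c → w j = 1 / 3)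
    (hw5 : ∀ j ∈ T, 3 * t j < c → w j = 0)
    (S : Finset ι) (hS : S ⊆ T) (hload : ∑ j ∈ S, t j ≤ c) :
    ∑ j ∈ S, w j ≤ 1 := by
  classical
  set A : Finset ι := S.filter (fun j => 2 * c < 3 * t j) with hAdef
  set B : Finset ι := S.filter (fun j => 3 * t j = 2 * c) with hBdef
  set C : Finset ι := S.filter (fun j => c < 3 * t j ∧ 3 * t j < 2 * c) with hCdef
  set D : Finset ι := S.filter (fun j => 3 * t j = c) with hDdef
  set E : Finset ι := S.filter (fun j => 3 * t j < c) with hEdef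
  -- split sums over S into the five classes
  have hsplit : ∀ f : ι → ℝ, ∑ j ∈ S, f j
      = ∑ j ∈ A, f j + ∑ j ∈ B, f j + ∑ j ∈ C, f j + ∑ j ∈ D, f j + ∑ j ∈ E, f j := by
    intro f
    have h1 := Finset.sum_filter_add_sum_filter_not S (fun j => 2 * c < 3 * t j) f
    have h2 := Finset.sum_filter_add_sum_filter_not
      (S.filter (fun j => ¬ 2 * c < 3 * t j)) (fun j => 3 * t j = 2 * c) f
    have h3 := Finset.sum_filter_add_sum_filter_not
      ((S.filter (fun j => ¬ 2 * c < 3 * t j)).filter (fun j => ¬ 3 * t j = 2 * c))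
      (fun j => c < 3 * t j) f
    have h4 := Finset.sum_filter_add_sum_filter_not
      (((S.filter (fun j => ¬ 2 * c < 3 * t j)).filter (fun j => ¬ 3 * t j = 2 * c)).filter
        (fun j => ¬ c < 3 * t j)) (fun j => 3 * t j = c) f
    have eB : (S.filter (fun j => ¬ 2 * c < 3 * t j)).filter (fun j => 3 * t j = 2 * c) = B := by
      rw [hBdef, Finset.filter_filter]
      apply Finset.filter_congr; intro x hx; constructor <;> intro h
      · exact h.2
      · exact ⟨by omega, h⟩
    have eC : ((S.filter (fun j => ¬ 2 * c < 3 * t j)).filter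
        (fun j => ¬ 3 * t j = 2 * c)).filter (fun j => c < 3 * t j) = C := by
      rw [hCdef, Finset.filter_filter, Finset.filter_filter]
      apply Finset.filter_congr; intro x hx; constructor <;> intro h
      · exact ⟨h.2.2, by omega⟩
      · exact ⟨by omega, by omega, h.1⟩
    have eD : (((S.filter (fun j => ¬ 2 * c < 3 * t j)).filter
        (fun j => ¬ 3 * t j = 2 * c)).filter (fun j => ¬ c < 3 * t j)).filter
        (fun j => 3 * t j = c) = D := by
      rw [hDdef, Finset.filter_filter, Finset.filter_filter, Finset.filter_filter]
      apply Finset.filter_congr; intro x hx; constructor <;> intro h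
      · exact h.2.2.2
      · exact ⟨by omega, by omega, by omega, h⟩
    have eE : (((S.filter (fun j => ¬ 2 * c < 3 * t j)).filter
        (fun j => ¬ 3 * t j = 2 * c)).filter (fun j => ¬ c < 3 * t j)).filter
        (fun j => ¬ 3 * t j = c) = E := by
      rw [hEdef, Finset.filter_filter, Finset.filter_filter, Finset.filter_filter]
      apply Finset.filter_congr; intro x hx; constructor <;> intro h
      · omega
      · exact ⟨by omega, by omega, by omega, by omega⟩
    rw [eB] at h2
    rw [eC] at h3
    rw [eD, eE] at h4
    rw [hAdef]
    linarith
  -- same split for natural-valued sums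
  have hsplitN : ∀ f : ι → ℕ, ∑ j ∈ S, f j
      = ∑ j ∈ A, f j + ∑ j ∈ B, f j + ∑ j ∈ C, f j + ∑ j ∈ D, f j + ∑ j ∈ E, f j := by
    intro f
    have := hsplit (fun j => (f j : ℝ))
    exact_mod_cast this
  -- weight sums on each class
  have hA1 : ∀ j ∈ A, w j = 1 := by
    intro j hj
    simp only [hAdef, Finset.mem_filter] at hj
    exact hw1 j (hS hj.1) hj.2
  have hB1 : ∀ j ∈ B, w j = 2 / 3 := by
    intro j hj
    simp only [hBdef, Finset.mem_filter] at hj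
    exact hw2 j (hS hj.1) hj.2
  have hC1 : ∀ j ∈ C, w j = 1 / 2 := by
    intro j hj
    simp only [hCdef, Finset.mem_filter] at hj
    exact hw3 j (hS hj.1) hj.2.1 hj.2.2
  have hD1 : ∀ j ∈ D, w j = 1 / 3 := by
    intro j hj
    simp only [hDdef, Finset.mem_filter] at hj
    exact hw4 j (hS hj.1) hj.2
  have hE1 : ∀ j ∈ E, w j = 0 := by
    intro j hj
    simp only [hEdef, Finset.mem_filter] at hj
    exact hw5 j (hS hj.1) hj.2
  have hwA : ∑ j ∈ A, w j = (A.card : ℝ) * 1 := by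
    rw [Finset.sum_congr rfl hA1, Finset.sum_const, nsmul_eq_mul]
  have hwB : ∑ j ∈ B, w j = (B.card : ℝ) * (2 / 3) := by
    rw [Finset.sum_congr rfl hB1, Finset.sum_const, nsmul_eq_mul]
  have hwC : ∑ j ∈ C, w j = (C.card : ℝ) * (1 / 2) := by
    rw [Finset.sum_congr rfl hC1, Finset.sum_const, nsmul_eq_mul]
  have hwD : ∑ j ∈ D, w j = (D.card : ℝ) * (1 / 3) := by
    rw [Finset.sum_congr rfl hD1, Finset.sum_const, nsmul_eq_mul]
  have hwE : ∑ j ∈ E, w j = 0 := by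
    rw [Finset.sum_congr rfl hE1, Finset.sum_const]
    simp
  -- processing-time lower bounds on each class
  have htA : A.card * (2 * c + 1) ≤ ∑ j ∈ A, 3 * t j := by
    have := Finset.card_nsmul_le_sum A (fun j => 3 * t j) (2 * c + 1) (by
      intro j hj
      simp only [hAdef, Finset.mem_filter] at hj
      show 2 * c + 1 ≤ 3 * t j
      omega)
    simpa [smul_eq_mul] using this
  have htB : B.card * (2 * c) ≤ ∑ j ∈ B, 3 * t j := by
    have := Finset.card_nsmul_le_sum B (fun j => 3 * t j) (2 * c) (by
      intro j hj
      simp only [hBdef, Finset.mem_filter] at hj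
      show 2 * c ≤ 3 * t j
      omega)
    simpa [smul_eq_mul] using this
  have htC : C.card * (c + 1) ≤ ∑ j ∈ C, 3 * t j := by
    have := Finset.card_nsmul_le_sum C (fun j => 3 * t j) (c + 1) (by
      intro j hj
      simp only [hCdef, Finset.mem_filter] at hj
      show c + 1 ≤ 3 * t j
      omega)
    simpa [smul_eq_mul] using this
  have htD : D.card * c ≤ ∑ j ∈ D, 3 * t j := by
    have := Finset.card_nsmul_le_sum D (fun j => 3 * t j) c (by
      intro j hj
      simp only [hDdef, Finset.mem_filter] at hj
      show c ≤ 3 * t j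
      omega)
    simpa [smul_eq_mul] using this
  have htotal : ∑ j ∈ S, 3 * t j ≤ 3 * c := by
    rw [← Finset.mul_sum]; omega
  have hkey : A.card * (2 * c + 1) + B.card * (2 * c) + C.card * (c + 1) + D.card * c ≤ 3 * c := by
    have := hsplitN (fun j => 3 * t j)
    have hEnn : 0 ≤ ∑ j ∈ E, 3 * t j := Nat.zero_le _
    omega
  have hcount : 6 * A.card + 4 * B.card + 3 * C.card + 2 * D.card ≤ 6 :=
    lb3_count_lemma A.card B.card C.card D.card c hc hkey
  rw [hsplit w, hwA, hwB, hwC, hwD, hwE]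
  have hcast : (6 * A.card + 4 * B.card + 3 * C.card + 2 * D.card : ℝ) ≤ 6 := by
    exact_mod_cast hcount
  push_cast at hcast ⊢
  linarith
end

section
/- (Validity of the lower bound LB₃.) Define weights w_j for j ∈ T by: w_j = 1 if 3·t_j > 2c; w_j = 2/3 if 3·t_j = 2c; w_j = 1/2 if c < 3·t_j < 2c; w_j = 1/3 if 3·t_j = c; and w_j = 0 if 3·t_j < c. If S₁, …, S_m is a partition of T into loads (pairwise disjoint, union T, and ∑_{j∈S_k} t_j ≤ c for every k), then m ≥ ⌈ ∑_{j∈T} w_j ⌉. -/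
open Finset

/-- Validity of the lower bound LB₃: with weights
`w_j = 1` if `3t_j > 2c`, `w_j = 2/3` if `3t_j = 2c`, `w_j = 1/2` if
`c < 3t_j < 2c`, `w_j = 1/3` if `3t_j = c` and `w_j = 0` if `3t_j < c`,
if `S₁, …, S_m` is a partition of `T` into loads, then `m ≥ ⌈∑_{j∈T} w_j⌉`. -/
theorem lb3_valid {ι : Type*} [DecidableEq ι]
    (T : Finset ι) (t : ι → ℕ) (c : ℕ) (hc : 0 < c)
    (ht : ∀ j ∈ T, 0 < t j) (htc : ∀ j ∈ T, t j ≤ c)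
    (w : ι → ℝ)
    (hw1 : ∀ j ∈ T, 2 * c < 3 * t j → w j = 1)
    (hw2 : ∀ j ∈ T, 3 * t j = 2 * c → w j = 2 / 3)
    (hw3 : ∀ j ∈ T, c < 3 * t j → 3 * t j < 2 * c → w j = 1 / 2)
    (hw4 : ∀ j ∈ T, 3 * t j = c → w j = 1 / 3)
    (hw5 : ∀ j ∈ T, 3 * t j < c → w j = 0)
    (m : ℕ) (S : Fin m → Finset ι)
    (hdisj : ∀ k l : Fin m, k ≠ l → Disjoint (S k) (S l))
    (hsub : ∀ k : Fin m, S k ⊆ T)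
    (hcover : ∀ j ∈ T, ∃ k : Fin m, j ∈ S k)
    (hload : ∀ k : Fin m, ∑ j ∈ S k, t j ≤ c) :
    ⌈∑ j ∈ T, w j⌉ ≤ (m : ℤ) := by
  -- value of w on heavy elements, bounded case analysis
  have hwle1 : ∀ j ∈ T, w j ≤ 1 := by
    intro j hj
    rcases lt_trichotomy (3 * t j) c with h | h | h
    · rw [hw5 j hj h]; norm_num
    · rw [hw4 j hj h]; norm_num
    · rcases lt_trichotomy (3 * t j) (2 * c) with h2 | h2 | h2
      · rw [hw3 j hj h h2]; norm_num
      · rw [hw2 j hj h2]; norm_num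
      · rw [hw1 j hj h2]
  have key : ∀ k : Fin m, ∑ j ∈ S k, w j ≤ 1 := by
    intro k
    classical
    set P := (S k).filter (fun j => c ≤ 3 * t j) with hPdef
    have hPsub : P ⊆ T := fun j hj => hsub k (Finset.mem_filter.mp hj).1
    have hsum : ∑ j ∈ S k, w j = ∑ j ∈ P, w j := by
      rw [← Finset.sum_filter_add_sum_filter_not (S k) (fun j => c ≤ 3 * t j) w]
      have h0 : ∑ j ∈ (S k).filter (fun j => ¬ c ≤ 3 * t j), w j = 0 := by
        apply Finset.sum_eq_zero
        intro j hj
        obtain ⟨hj1, hj2⟩ := Finset.mem_filter.mp hj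
        exact hw5 j (hsub k hj1) (by omega)
      rw [h0, add_zero]
    rw [hsum]
    have hPt : ∑ j ∈ P, t j ≤ c :=
      le_trans (Finset.sum_le_sum_of_subset (Finset.filter_subset _ _)) (hload k)
    have hPc : ∀ j ∈ P, c ≤ 3 * t j := fun j hj => (Finset.mem_filter.mp hj).2
    have hcard3 : P.card ≤ 3 := by
      by_contra h
      push_neg at h
      have h1 : P.card • c ≤ ∑ j ∈ P, 3 * t j :=
        Finset.card_nsmul_le_sum P _ c hPc
      have h2 : ∑ j ∈ P, 3 * t j = 3 * ∑ j ∈ P, t j := by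
        rw [Finset.mul_sum]
      simp only [smul_eq_mul] at h1
      have h3 : 4 * c ≤ P.card * c := Nat.mul_le_mul_right c (by omega)
      omega
    have hcases : P.card = 0 ∨ P.card = 1 ∨ P.card = 2 ∨ P.card = 3 := by omega
    rcases hcases with h0 | h1 | h2 | h3
    · rw [Finset.card_eq_zero.mp h0]; simp
    · obtain ⟨a, ha⟩ := Finset.card_eq_one.mp h1
      rw [ha, Finset.sum_singleton]
      exact hwle1 a (hPsub (ha ▸ Finset.mem_singleton_self a))
    · obtain ⟨a, b, hab, hP⟩ := Finset.card_eq_two.mp h2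
      have haP : a ∈ P := hP ▸ Finset.mem_insert_self a {b}
      have hbP : b ∈ P := hP ▸ Finset.mem_insert_of_mem (Finset.mem_singleton_self b)
      have haT : a ∈ T := hPsub haP
      have hbT : b ∈ T := hPsub hbP
      have hta : c ≤ 3 * t a := hPc a haP
      have htb : c ≤ 3 * t b := hPc b hbP
      have hsum2 : t a + t b ≤ c := by
        have := hPt
        rw [hP, Finset.sum_pair hab] at this
        exact this
      rw [hP, Finset.sum_pair hab]
      -- both 3*t a and 3*t b are ≤ 2c
      have h2a : 3 * t a ≤ 2 * c := by omega
      have h2b : 3 * t b ≤ 2 * c := by omega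
      rcases lt_trichotomy (3 * t a) c with ha1 | ha1 | ha1
      · omega
      · rw [hw4 a haT ha1]
        rcases lt_trichotomy (3 * t b) c with hb1 | hb1 | hb1
        · omega
        · rw [hw4 b hbT hb1]; norm_num
        · rcases eq_or_lt_of_le h2b with hb2 | hb2
          · rw [hw2 b hbT hb2]; norm_num
          · rw [hw3 b hbT hb1 hb2]; norm_num
      · rcases eq_or_lt_of_le h2a with ha2 | ha2
        · -- 3 t a = 2c forces 3 t b = c
          have hb1 : 3 * t b = c := by omega
          rw [hw2 a haT ha2, hw4 b hbT hb1]; norm_num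
        · rw [hw3 a haT ha1 ha2]
          rcases lt_trichotomy (3 * t b) c with hb1 | hb1 | hb1
          · omega
          · rw [hw4 b hbT hb1]; norm_num
          · rcases eq_or_lt_of_le h2b with hb2 | hb2
            · -- 3 t b = 2c forces 3 t a ≤ c, contradiction with ha1
              omega
            · rw [hw3 b hbT hb1 hb2]; norm_num
    · obtain ⟨a, b, d, hab, had, hbd, hP⟩ := Finset.card_eq_three.mp h3
      have haP : a ∈ P := hP ▸ Finset.mem_insert_self a {b, d}
      have hbP : b ∈ P := by rw [hP]; simp
      have hdP : d ∈ P := by rw [hP]; simp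
      have hta : c ≤ 3 * t a := hPc a haP
      have htb : c ≤ 3 * t b := hPc b hbP
      have htd : c ≤ 3 * t d := hPc d hdP
      have hsum3 : t a + t b + t d ≤ c := by
        have := hPt
        rw [hP] at this
        rw [Finset.sum_insert (by simp [hab, had]),
            Finset.sum_insert (by simp [hbd]), Finset.sum_singleton] at this
        omega
      have ha1 : 3 * t a = c := by omega
      have hb1 : 3 * t b = c := by omega
      have hd1 : 3 * t d = c := by omega
      rw [hP, Finset.sum_insert (by simp [hab, had]),
          Finset.sum_insert (by simp [hbd]), Finset.sum_singleton,
          hw4 a (hPsub haP) ha1, hw4 b (hPsub hbP) hb1, hw4 d (hPsub hdP) hd1]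
      norm_num
  -- assemble
  rw [Int.ceil_le]
  push_cast
  have hTeq : T = Finset.univ.biUnion S := by
    ext j
    simp only [Finset.mem_biUnion, Finset.mem_univ, true_and]
    exact ⟨fun hj => hcover j hj, fun ⟨k, hk⟩ => hsub k hk⟩
  calc ∑ j ∈ T, w j = ∑ k : Fin m, ∑ j ∈ S k, w j := by
        rw [hTeq]
        exact Finset.sum_biUnion (fun k _ l _ hkl => hdisj k l hkl)
    _ ≤ ∑ k : Fin m, (1 : ℝ) := Finset.sum_le_sum (fun k _ => key k)
    _ = m := by simp
end

section
/- (Validity of the memory-based dominance rule.) Extendability of a partial U-line solution depends only on its set of assigned tasks: let N = (S₁, …, S_m; σ) and M = (S'₁, …, S'_{m'}; σ') be feasible partial U-line solutions with the same assigned task set A = S₁∪…∪S_m = S'₁∪…∪S'_{m'}. If N can be extended to a feasible U-line balance of all of T using r additional stations (i.e., a full feasible balance with stations S₁, …, S_m, S_{m+1}, …, S_{m+r} whose ordering extends σ), then M can be extended to a feasible U-line balance of T with m' + r stations. In particular, if m' ≤ m, every complete solution obtainable from node N has at least as many stations as some complete solution obtainable from node M, so node N may be pruned. -/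
open Finset

/-- A feasible partial U-line solution on the task set `T`: a list `B` of
pairwise-disjoint nonempty station loads (its assigned tasks are those of
`B.flatten`, a subset of `T`), each observing the cycle time, such that every
assigned task is, at its position in the ordering `σ = B.flatten`, forward
available (all its predecessors in `T` occur earlier) or backward available
(all its successors in `T` occur earlier). -/
def IsUPartial {ι : Type*} (T : Finset ι) (t : ι → ℕ) (c : ℕ)
    (prec : ι → ι → Prop) (B : List (List ι)) : Prop :=
  B.flatten.Nodup ∧
  (∀ j, j ∈ B.flatten → j ∈ T) ∧
  (∀ b ∈ B, b ≠ [] ∧ (b.map t).sum ≤ c) ∧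
  ∀ i (h : i < B.flatten.length),
    (∀ k ∈ T, prec k (B.flatten.get ⟨i, h⟩) → k ∈ B.flatten.take i) ∨
    (∀ k ∈ T, prec (B.flatten.get ⟨i, h⟩) k → k ∈ B.flatten.take i)

/-- A feasible U-line balance of `T`: a feasible partial U-line solution whose
assigned task set is all of `T`. -/
def IsUBalance {ι : Type*} (T : Finset ι) (t : ι → ℕ) (c : ℕ)
    (prec : ι → ι → Prop) (B : List (List ι)) : Prop :=
  IsUPartial T t c prec B ∧ ∀ j ∈ T, j ∈ B.flatten

/-- Validity of the memory-based dominance rule: extendability of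
a partial U-line solution depends only on its set of assigned tasks. If `N` and
`M` are feasible partial U-line solutions with the same assigned task set, and
`N` extends (by appending `r` further stations, with ordering extending that of
`N`) to a feasible U-line balance of all of `T`, then `M` also extends to a
feasible U-line balance of `T` using `r` additional stations, i.e. with
`M.length + r` stations in total. -/
theorem memory_dominance_rule {ι : Type*} [DecidableEq ι]
    (T : Finset ι) (t : ι → ℕ) (c : ℕ) (hc : 0 < c)
    (ht : ∀ j ∈ T, 0 < t j) (htc : ∀ j ∈ T, t j ≤ c)
    (prec : ι → ι → Prop)
    (hacyc : ∀ j, ¬ Relation.TransGen prec j j)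
    (N M : List (List ι))
    (hN : IsUPartial T t c prec N)
    (hM : IsUPartial T t c prec M)
    -- `N` and `M` have the same set of assigned tasks
    (hsame : ∀ j, j ∈ N.flatten ↔ j ∈ M.flatten)
    -- `N` can be extended to a full feasible balance using `r` extra stations
    (r : ℕ) (C : List (List ι))
    (hC : IsUBalance T t c prec (N ++ C))
    (hr : C.length = r) :
    ∃ C' : List (List ι), C'.length = r ∧ IsUBalance T t c prec (M ++ C') := by
  classical
  obtain ⟨hNnd, hNT, hNld, hNav⟩ := hN
  obtain ⟨hMnd, hMT, hMld, hMav⟩ := hM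
  obtain ⟨⟨hCnd, hCT, hCld, hCav⟩, hCfull⟩ := hC
  rw [List.flatten_append] at hCnd hCT hCfull hCav
  -- same length of the orderings
  have hperm : N.flatten.Perm M.flatten :=
    (List.perm_ext_iff_of_nodup hNnd hMnd).2 hsame
  have hlen : N.flatten.length = M.flatten.length := hperm.length_eq
  have hdisj : List.Disjoint M.flatten C.flatten := by
    intro a haM haC
    exact (List.disjoint_of_nodup_append hCnd) ((hsame a).2 haM) haC
  refine ⟨C, hr, ⟨⟨?_, ?_, ?_, ?_⟩, ?_⟩⟩
  · rw [List.flatten_append]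
    exact hMnd.append (hCnd.of_append_right) hdisj
  · rw [List.flatten_append]
    intro j hj
    rcases List.mem_append.1 hj with h | h
    · exact hMT j h
    · exact hCT j (List.mem_append.2 (Or.inr h))
  · intro b hb
    rcases List.mem_append.1 hb with h | h
    · exact hMld b h
    · exact hCld b (List.mem_append.2 (Or.inr h))
  · rw [List.flatten_append]
    intro i h
    by_cases hi : i < M.flatten.length
    · -- index within M : use hM's availability
      have hget : (M.flatten ++ C.flatten).get ⟨i, h⟩ = M.flatten.get ⟨i, hi⟩ := by
        simp [List.getElem_append_left hi]
      have htake : (M.flatten ++ C.flatten).take i = M.flatten.take i :=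
        List.take_append_of_le_length (le_of_lt hi)
      rcases hMav i hi with hf | hf
      · left; intro k hk hpk
        rw [htake]; exact hf k hk (by rwa [hget] at hpk)
      · right; intro k hk hpk
        rw [htake]; exact hf k hk (by rwa [hget] at hpk)
    · -- index within C : use the availability of N ++ C
      push_neg at hi
      have hi' : ¬ i < N.flatten.length := by omega
      have hNC : i < (N.flatten ++ C.flatten).length := by
        rw [List.length_append]
        rw [List.length_append] at h
        omega
      have hgetM : (M.flatten ++ C.flatten).get ⟨i, h⟩
          = C.flatten.get ⟨i - M.flatten.length, by
              rw [List.length_append] at h; omega⟩ := by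
        simp [List.getElem_append_right (by omega : M.flatten.length ≤ i)]
      have hgetN : (N.flatten ++ C.flatten).get ⟨i, hNC⟩
          = C.flatten.get ⟨i - N.flatten.length, by
              rw [List.length_append] at hNC; omega⟩ := by
        simp [List.getElem_append_right (by omega : N.flatten.length ≤ i)]
      have hgeteq : (M.flatten ++ C.flatten).get ⟨i, h⟩
          = (N.flatten ++ C.flatten).get ⟨i, hNC⟩ := by
        have heq : i - M.flatten.length = i - N.flatten.length := by omega
        rw [hgetM, hgetN]
        congr 1
        exact Fin.ext heq
      have htakemem : ∀ k, k ∈ (N.flatten ++ C.flatten).take i →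
          k ∈ (M.flatten ++ C.flatten).take i := by
        intro k hk
        rw [List.take_append,
          List.take_of_length_le (by omega : N.flatten.length ≤ i)] at hk
        rw [List.take_append,
          List.take_of_length_le (by omega : M.flatten.length ≤ i)]
        rcases List.mem_append.1 hk with h1 | h1
        · exact List.mem_append.2 (Or.inl ((hsame k).1 h1))
        · have heq : i - N.flatten.length = i - M.flatten.length := by omega
          rw [heq] at h1
          exact List.mem_append.2 (Or.inr h1)
      rcases hCav i hNC with hf | hf
      · left; intro k hk hpk
        exact htakemem k (hf k hk (by rwa [hgeteq] at hpk))
      · right; intro k hk hpk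
        exact htakemem k (hf k hk (by rwa [hgeteq] at hpk))
  · intro j hj
    rw [List.flatten_append]
    rcases List.mem_append.1 (hCfull j hj) with h | h
    · exact List.mem_append.2 (Or.inl ((hsame j).1 h))
    · exact List.mem_append.2 (Or.inr h)
end
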